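/- Let k be a positive integer and run the peeling process on M_k, with iterates Q_0 = M_k, Q_{i+1} = peel(Q_i), and layers C_{i+1} = extremePoints ℝ (convexHull ℝ Q_i). For every i with Q_i ≠ ∅, there exists j ∈ {1,…,k} such that every point p of the layer C_{i+1} satisfies max(|p₁|, |p₂|) = 3^j / 2; that is, each convex layer of M_k is contained in the boundary of one of the squares S_j. -/

import Mathlib

/-- Remove from `P` the extreme points (vertices) of its convex hull. -/
noncomputable def peel (P : Set (ℝ × ℝ)) : Set (ℝ × ℝ) :=
  P \ (convexHull ℝ P).extremePoints ℝ

/-- The set `M_k` of the `4k²` intersection points of the `4k` lines extending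
the sides of the concentric squares `S_j = [−3^j/2, 3^j/2]²`, `1 ≤ j ≤ k`. -/
def Mset (k : ℕ) : Set (ℝ × ℝ) :=
  {p | ∃ (ε δ : ℝ) (i j : ℕ), (ε = 1 ∨ ε = -1) ∧ (δ = 1 ∨ δ = -1) ∧
    1 ≤ i ∧ i ≤ k ∧ 1 ≤ j ∧ j ≤ k ∧ p = (ε * 3 ^ i / 2, δ * 3 ^ j / 2)}

/-- Intermediate states of the peeling process. -/
def QQ (m r : ℕ) : Set (ℝ × ℝ) :=
  {p | ∃ (ε δ : ℝ) (a b : ℕ), (ε = 1 ∨ ε = -1) ∧ (δ = 1 ∨ δ = -1) ∧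
    1 ≤ a ∧ 1 ≤ b ∧ p = (ε * 3 ^ a / 2, δ * 3 ^ b / 2) ∧
    ((a ≤ m - 1 ∧ b ≤ m - 1) ∨ (a = m ∧ b ≤ r) ∨ (b = m ∧ a ≤ r))}

/-- The layers of the peeling process. -/
def BB (m r : ℕ) : Set (ℝ × ℝ) :=
  {p | ∃ (ε δ : ℝ), (ε = 1 ∨ ε = -1) ∧ (δ = 1 ∨ δ = -1) ∧
    (p = (ε * 3 ^ m / 2, δ * 3 ^ r / 2) ∨ p = (ε * 3 ^ r / 2, δ * 3 ^ m / 2))}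

/-- The linear functional `(x, y) ↦ c₁ x + c₂ y`. -/
noncomputable def lf (c₁ c₂ : ℝ) : (ℝ × ℝ) →ₗ[ℝ] ℝ :=
  c₁ • LinearMap.fst ℝ ℝ ℝ + c₂ • LinearMap.snd ℝ ℝ ℝ

lemma lf_apply (c₁ c₂ : ℝ) (q : ℝ × ℝ) : lf c₁ c₂ q = c₁ * q.1 + c₂ * q.2 := by
  simp [lf, smul_eq_mul]

/-- A unique maximizer of a linear functional is an extreme point of the hull. -/
lemma extreme_of_unique_max {s : Set (ℝ × ℝ)} (f : (ℝ × ℝ) →ₗ[ℝ] ℝ) {p : ℝ × ℝ}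
    (hp : p ∈ s) (hmax : ∀ q ∈ s, q ≠ p → f q < f p) :
    p ∈ (convexHull ℝ s).extremePoints ℝ := by
  have hball : ∀ q ∈ s, f q ≤ f p := by
    intro q hq
    rcases eq_or_ne q p with rfl | h
    · exact le_refl _
    · exact (hmax q hq h).le
  have hhull : ∀ x ∈ convexHull ℝ s, f x ≤ f p := by
    intro x hx
    exact convexHull_min hball (convex_halfSpace_le (LinearMap.isLinear f) (f p)) hx
  have key : ∀ x ∈ convexHull ℝ s, f x = f p → x = p := by
    intro x hx hfx
    rw [convexHull_eq] at hx
    obtain ⟨ι, t, w, z, hw0, hw1, hz, hcm⟩ := hx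
    rw [Finset.centerMass, hw1, inv_one, one_smul] at hcm
    have hfs : ∑ i ∈ t, w i * f (z i) = f p := by
      have h1 : f x = ∑ i ∈ t, w i * f (z i) := by
        rw [← hcm, map_sum]
        simp [smul_eq_mul]
      linarith [h1, hfx]
    have hterm : ∀ i ∈ t, w i * (f p - f (z i)) = 0 := by
      apply (Finset.sum_eq_zero_iff_of_nonneg ?_).1
      · have h1 : ∑ i ∈ t, w i * f p = f p := by
          rw [← Finset.sum_mul, hw1, one_mul]
        calc ∑ i ∈ t, w i * (f p - f (z i))
            = ∑ i ∈ t, (w i * f p - w i * f (z i)) := by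
              apply Finset.sum_congr rfl; intro i _; ring
          _ = (∑ i ∈ t, w i * f p) - ∑ i ∈ t, w i * f (z i) := Finset.sum_sub_distrib _ _
          _ = 0 := by rw [h1, hfs, sub_self]
      · intro i hi
        exact mul_nonneg (hw0 i hi) (by linarith [hball (z i) (hz i hi)])
    have hzp : ∀ i ∈ t, w i • z i = w i • p := by
      intro i hi
      rcases eq_or_ne (w i) 0 with h0 | h0
      · rw [h0, zero_smul, zero_smul]
      · have hfz : f (z i) = f p := by
          rcases mul_eq_zero.1 (hterm i hi) with h | h
          · exact absurd h h0
          · linarith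
        have hzi : z i = p := by
          by_contra hzp
          exact absurd hfz (ne_of_lt (hmax (z i) (hz i hi) hzp))
        rw [hzi]
    rw [← hcm, Finset.sum_congr rfl hzp, ← Finset.sum_smul, hw1, one_smul]
  rw [mem_extremePoints]
  refine ⟨subset_convexHull ℝ s hp, ?_⟩
  intro x₁ h₁ x₂ h₂ hseg
  obtain ⟨u, v, hu, hv, huv, hsum⟩ := hseg
  have hf1 : f x₁ ≤ f p := hhull x₁ h₁
  have hf2 : f x₂ ≤ f p := hhull x₂ h₂
  have hfp : u * f x₁ + v * f x₂ = f p := by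
    rw [← hsum]; simp [smul_eq_mul]
  have hsplit : u * f p + v * f p = f p := by rw [← add_mul, huv, one_mul]
  have e1 : f x₁ = f p := by
    by_contra h
    have h' : f x₁ < f p := lt_of_le_of_ne hf1 h
    linarith [mul_lt_mul_of_pos_left h' hu, mul_le_mul_of_nonneg_left hf2 hv.le]
  have e2 : f x₂ = f p := by
    by_contra h
    have h' : f x₂ < f p := lt_of_le_of_ne hf2 h
    linarith [mul_lt_mul_of_pos_left h' hv, mul_le_mul_of_nonneg_left hf1 hu.le]
  exact ⟨key x₁ h₁ e1, key x₂ h₂ e2⟩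

/-- A point strictly inside a segment of the hull is not extreme. -/
lemma not_extreme_of_openSegment {s : Set (ℝ × ℝ)} {A B p : ℝ × ℝ}
    (hA : A ∈ convexHull ℝ s) (hB : B ∈ convexHull ℝ s)
    (t : ℝ) (h0 : 0 < t) (h1 : t < 1) (hp : t • A + (1 - t) • B = p) (hne : A ≠ p) :
    p ∉ (convexHull ℝ s).extremePoints ℝ := by
  intro h
  exact hne ((mem_extremePoints.1 h).2 A hA B hB ⟨t, 1 - t, h0, by linarith, by ring, hp⟩).1

lemma pow3_pos (n : ℕ) : (0:ℝ) < 3 ^ n := by positivity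

lemma pow3_le {a b : ℕ} (h : a ≤ b) : (3:ℝ) ^ a ≤ 3 ^ b :=
  pow_le_pow_right₀ (by norm_num) h

lemma pow3_lt {a b : ℕ} (h : a < b) : (3:ℝ) ^ a < 3 ^ b :=
  pow_lt_pow_right₀ (by norm_num) h

lemma pow3_inj {a b : ℕ} (h : (3:ℝ) ^ a = 3 ^ b) : a = b := by
  rcases lt_trichotomy a b with hl | he | hl
  · exact absurd h (ne_of_lt (pow3_lt hl))
  · exact he
  · exact absurd h.symm (ne_of_lt (pow3_lt hl))

lemma sign_pow_inj {ε ε' : ℝ} (hε : ε = 1 ∨ ε = -1) (hε' : ε' = 1 ∨ ε' = -1) {a b : ℕ}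
    (h : ε * 3 ^ a / 2 = ε' * 3 ^ b / 2) : a = b ∧ ε = ε' := by
  rcases hε with rfl | rfl <;> rcases hε' with rfl | rfl
  · refine ⟨pow3_inj ?_, rfl⟩; nlinarith
  · exfalso; nlinarith [pow3_pos a, pow3_pos b]
  · exfalso; nlinarith [pow3_pos a, pow3_pos b]
  · refine ⟨pow3_inj ?_, rfl⟩; nlinarith

lemma abs_sign_div {ε x : ℝ} (hε : ε = 1 ∨ ε = -1) (hx : 0 ≤ x) : |ε * x / 2| = x / 2 := by
  rcases hε with rfl | rfl
  · rw [one_mul, abs_of_nonneg (by linarith)]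
  · rw [neg_one_mul, neg_div, abs_neg, abs_of_nonneg (by linarith)]

lemma pair_eq {x1 y1 x2 y2 : ℝ} (h1 : x1 = x2) (h2 : y1 = y2) :
    ((x1, y1) : ℝ × ℝ) = (x2, y2) := by rw [h1, h2]

lemma not_extreme_vert {s : Set (ℝ × ℝ)} {X y Y : ℝ}
    (hA : (X, Y) ∈ convexHull ℝ s) (hB : (X, -Y) ∈ convexHull ℝ s)
    (hy : |y| < Y) : (X, y) ∉ (convexHull ℝ s).extremePoints ℝ := by
  have hY : 0 < Y := lt_of_le_of_lt (abs_nonneg y) hy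
  have hy1 : -Y < y := neg_lt_of_abs_lt hy
  have hy2 : y < Y := lt_of_abs_lt hy
  refine not_extreme_of_openSegment hA hB ((Y + y) / (2 * Y))
    (div_pos (by linarith) (by linarith)) ((div_lt_one (by linarith)).2 (by linarith)) ?_ ?_
  · have h2Y : (2 * Y) ≠ 0 := ne_of_gt (by linarith)
    simp only [Prod.smul_mk, Prod.mk_add_mk, Prod.mk.injEq, smul_eq_mul]
    constructor
    · ring
    · field_simp
      ring
  · intro h
    rw [Prod.mk.injEq] at h
    linarith [h.2]

lemma not_extreme_horiz {s : Set (ℝ × ℝ)} {X x Z : ℝ}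
    (hA : (X, Z) ∈ convexHull ℝ s) (hB : (-X, Z) ∈ convexHull ℝ s)
    (hx : |x| < X) : (x, Z) ∉ (convexHull ℝ s).extremePoints ℝ := by
  have hX : 0 < X := lt_of_le_of_lt (abs_nonneg x) hx
  have hx1 : -X < x := neg_lt_of_abs_lt hx
  have hx2 : x < X := lt_of_abs_lt hx
  refine not_extreme_of_openSegment hA hB ((X + x) / (2 * X))
    (div_pos (by linarith) (by linarith)) ((div_lt_one (by linarith)).2 (by linarith)) ?_ ?_
  · have h2X : (2 * X) ≠ 0 := ne_of_gt (by linarith)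
    simp only [Prod.smul_mk, Prod.mk_add_mk, Prod.mk.injEq, smul_eq_mul]
    constructor
    · field_simp
      ring
    · ring
  · intro h
    rw [Prod.mk.injEq] at h
    linarith [h.1]

lemma not_extreme_diag {s : Set (ℝ × ℝ)} {d : ℝ × ℝ} {u v c : ℝ}
    (hA : u • d ∈ convexHull ℝ s) (hB : v • d ∈ convexHull ℝ s)
    (hvc : v < c) (hcu : c < u) (hd : d ≠ 0) :
    c • d ∉ (convexHull ℝ s).extremePoints ℝ := by
  have huv : v < u := lt_trans hvc hcu
  refine not_extreme_of_openSegment hA hB ((c - v) / (u - v))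
    (div_pos (by linarith) (by linarith)) ((div_lt_one (by linarith)).2 (by linarith)) ?_ ?_
  · rw [smul_smul, smul_smul, ← add_smul]
    congr 1
    have huv' : u - v ≠ 0 := sub_ne_zero.2 (ne_of_gt huv)
    field_simp
    ring
  · intro h
    have h0 : (u - c) • d = 0 := by rw [sub_smul, h, sub_self]
    rcases smul_eq_zero.1 h0 with h' | h'
    · linarith
    · exact hd h'

set_option maxHeartbeats 1000000 in
lemma extremePoints_QQ (m r : ℕ) (hr : 1 ≤ r) (hrm : r ≤ m) :
    (convexHull ℝ (QQ m r)).extremePoints ℝ = BB m r := by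
  have hm1 : 1 ≤ m := le_trans hr hrm
  have h3m : (3:ℝ) ^ m = 3 * 3 ^ (m - 1) := by
    rw [← pow_succ']
    congr 1
    omega
  apply Set.Subset.antisymm
  · -- the extreme points are among BB
    intro p hp
    have hpQ : p ∈ QQ m r := extremePoints_convexHull_subset hp
    obtain ⟨ε, δ, a, b, hε, hδ, ha1, hb1, rfl, hreg⟩ := hpQ
    by_contra hnB
    rcases hreg with ⟨haM, hbM⟩ | ⟨ham, hbr⟩ | ⟨hbm, har⟩
    · -- interior points: a, b ≤ m - 1  (so m ≥ 2)
      have hm2 : 2 ≤ m := by omega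
      rcases Nat.lt_or_ge a (m - 1) with haM2 | haM2
      · -- horizontal flank at level a+1
        have hAq : ((3:ℝ) ^ (a+1) / 2, δ * 3 ^ b / 2) ∈ QQ m r :=
          ⟨1, δ, a+1, b, Or.inl rfl, hδ, by omega, hb1, by norm_num, Or.inl ⟨by omega, hbM⟩⟩
        have hBq : (-((3:ℝ) ^ (a+1) / 2), δ * 3 ^ b / 2) ∈ QQ m r :=
          ⟨-1, δ, a+1, b, Or.inr rfl, hδ, by omega, hb1, pair_eq (by ring) rfl, Or.inl ⟨by omega, hbM⟩⟩
        refine not_extreme_horiz (subset_convexHull ℝ _ hAq) (subset_convexHull ℝ _ hBq) ?_ hp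
        rw [abs_sign_div hε (pow3_pos a).le]
        linarith [pow3_lt (show a < a + 1 by omega)]
      · rcases Nat.lt_or_ge b (m - 1) with hbM2 | hbM2
        · -- vertical flank at level b+1
          have hAq : (ε * 3 ^ a / 2, (3:ℝ) ^ (b+1) / 2) ∈ QQ m r :=
            ⟨ε, 1, a, b+1, hε, Or.inl rfl, ha1, by omega, pair_eq rfl (by ring), Or.inl ⟨haM, by omega⟩⟩
          have hBq : (ε * 3 ^ a / 2, -((3:ℝ) ^ (b+1) / 2)) ∈ QQ m r :=
            ⟨ε, -1, a, b+1, hε, Or.inr rfl, ha1, by omega, pair_eq rfl (by ring), Or.inl ⟨haM, by omega⟩⟩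
          refine not_extreme_vert (subset_convexHull ℝ _ hAq) (subset_convexHull ℝ _ hBq) ?_ hp
          rw [abs_sign_div hδ (pow3_pos b).le]
          linarith [pow3_lt (show b < b + 1 by omega)]
        · -- a = b = m - 1 : diagonal
          have ha : a = m - 1 := by omega
          have hb : b = m - 1 := by omega
          subst ha; subst hb
          have hP1 : (ε * 3 ^ m / 2, δ * 3 ^ r / 2) ∈ QQ m r :=
            ⟨ε, δ, m, r, hε, hδ, hm1, hr, rfl, Or.inr (Or.inl ⟨rfl, le_refl r⟩)⟩
          have hP2 : (ε * 3 ^ r / 2, δ * 3 ^ m / 2) ∈ QQ m r :=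
            ⟨ε, δ, r, m, hε, hδ, hr, hm1, rfl, Or.inr (Or.inr ⟨rfl, le_refl r⟩)⟩
          have hAmem : (((3:ℝ) ^ m + 3 ^ r) / 4) • ((ε, δ) : ℝ × ℝ) ∈ convexHull ℝ (QQ m r) := by
            have hc := (convex_convexHull ℝ (QQ m r))
              (subset_convexHull ℝ _ hP1) (subset_convexHull ℝ _ hP2)
              (by norm_num : (0:ℝ) ≤ 1/2) (by norm_num : (0:ℝ) ≤ 1/2) (by norm_num)
            convert hc using 1
            simp only [Prod.smul_mk, Prod.mk_add_mk, Prod.mk.injEq, smul_eq_mul]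
            constructor <;> ring
          have hBq : ((-3/2 : ℝ)) • ((ε, δ) : ℝ × ℝ) ∈ QQ m r := by
            refine ⟨-ε, -δ, 1, 1, ?_, ?_, le_refl 1, le_refl 1, ?_, Or.inl ⟨by omega, by omega⟩⟩
            · rcases hε with rfl | rfl
              · exact Or.inr (by norm_num)
              · exact Or.inl (by norm_num)
            · rcases hδ with rfl | rfl
              · exact Or.inr (by norm_num)
              · exact Or.inl (by norm_num)
            · simp only [Prod.smul_mk, Prod.mk.injEq, smul_eq_mul]
              constructor <;> ring
          have hps : (ε * 3 ^ (m-1) / 2, δ * 3 ^ (m-1) / 2)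
              = ((3:ℝ) ^ (m-1) / 2) • ((ε, δ) : ℝ × ℝ) := by
            simp only [Prod.smul_mk, Prod.mk.injEq, smul_eq_mul]
            constructor <;> ring
          rw [hps] at hp
          refine not_extreme_diag hAmem (subset_convexHull ℝ _ hBq) ?_ ?_ ?_ hp
          · nlinarith [pow3_pos (m-1)]
          · nlinarith [pow3_pos r, pow3_pos (m-1)]
          · intro h
            rcases hε with rfl | rfl <;> simpa using congrArg Prod.fst h
    · -- a = m, b ≤ r
      rcases Nat.lt_or_ge b r with hblt | hbge
      · have hAq : (ε * 3 ^ a / 2, (3:ℝ) ^ r / 2) ∈ QQ m r :=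
          ⟨ε, 1, a, r, hε, Or.inl rfl, ha1, hr, pair_eq rfl (by ring), Or.inr (Or.inl ⟨ham, le_refl r⟩)⟩
        have hBq : (ε * 3 ^ a / 2, -((3:ℝ) ^ r / 2)) ∈ QQ m r :=
          ⟨ε, -1, a, r, hε, Or.inr rfl, ha1, hr, pair_eq rfl (by ring), Or.inr (Or.inl ⟨ham, le_refl r⟩)⟩
        refine not_extreme_vert (subset_convexHull ℝ _ hAq) (subset_convexHull ℝ _ hBq) ?_ hp
        rw [abs_sign_div hδ (pow3_pos b).le]
        linarith [pow3_lt hblt]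
      · have hb : b = r := by omega
        refine hnB ⟨ε, δ, hε, hδ, Or.inl (pair_eq ?_ ?_)⟩
        · rw [ham]
        · rw [hb]
    · -- b = m, a ≤ r
      rcases Nat.lt_or_ge a r with halt | hage
      · have hAq : ((3:ℝ) ^ r / 2, δ * 3 ^ b / 2) ∈ QQ m r :=
          ⟨1, δ, r, b, Or.inl rfl, hδ, hr, hb1, pair_eq (by ring) rfl, Or.inr (Or.inr ⟨hbm, le_refl r⟩)⟩
        have hBq : (-((3:ℝ) ^ r / 2), δ * 3 ^ b / 2) ∈ QQ m r :=
          ⟨-1, δ, r, b, Or.inr rfl, hδ, hr, hb1, pair_eq (by ring) rfl, Or.inr (Or.inr ⟨hbm, le_refl r⟩)⟩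
        refine not_extreme_horiz (subset_convexHull ℝ _ hAq) (subset_convexHull ℝ _ hBq) ?_ hp
        rw [abs_sign_div hε (pow3_pos a).le]
        linarith [pow3_lt halt]
      · have ha : a = r := by omega
        refine hnB ⟨ε, δ, hε, hδ, Or.inr (pair_eq ?_ ?_)⟩
        · rw [ha]
        · rw [hbm]
  · -- every point of BB is extreme
    rintro p ⟨ε, δ, hε, hδ, hp | hp⟩ <;> subst hp
    · -- p = (ε 3^m/2, δ 3^r/2) ; functional (x,y) ↦ 3ε x + δ y
      have hpQ : (ε * 3 ^ m / 2, δ * 3 ^ r / 2) ∈ QQ m r :=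
        ⟨ε, δ, m, r, hε, hδ, hm1, hr, rfl, Or.inr (Or.inl ⟨rfl, le_refl r⟩)⟩
      apply extreme_of_unique_max (lf (3 * ε) δ) hpQ
      rintro q ⟨ε', δ', a, b, hε', hδ', ha1, hb1, rfl, hreg⟩ hne
      have hfq : lf (3 * ε) δ (ε' * 3 ^ a / 2, δ' * 3 ^ b / 2)
          = (3 * (ε * ε') * 3 ^ a + (δ * δ') * 3 ^ b) / 2 := by
        rw [lf_apply]; ring
      have hfp : lf (3 * ε) δ (ε * 3 ^ m / 2, δ * 3 ^ r / 2)
          = (3 * 3 ^ m + 3 ^ r) / 2 := by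
        rw [lf_apply]; rcases hε with rfl | rfl <;> rcases hδ with rfl | rfl <;> ring
      rw [hfq, hfp]
      have he : ε * ε' = 1 ∨ ε * ε' = -1 := by
        rcases hε with rfl | rfl <;> rcases hε' with rfl | rfl <;> norm_num
      have hd : δ * δ' = 1 ∨ δ * δ' = -1 := by
        rcases hδ with rfl | rfl <;> rcases hδ' with rfl | rfl <;> norm_num
      have hee : (ε * ε') * 3 ^ a ≤ 3 ^ a := by
        rcases he with h | h <;> rw [h] <;> nlinarith [pow3_pos a]
      have hdd : (δ * δ') * 3 ^ b ≤ 3 ^ b := by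
        rcases hd with h | h <;> rw [h] <;> nlinarith [pow3_pos b]
      rcases hreg with ⟨haM, hbM⟩ | ⟨ham, hbr⟩ | ⟨hbm, har⟩
      · have h3a : (3:ℝ) ^ a ≤ 3 ^ (m-1) := pow3_le haM
        have h3b : (3:ℝ) ^ b ≤ 3 ^ (m-1) := pow3_le hbM
        nlinarith [pow3_pos r, pow3_pos (m-1), pow3_pos a, pow3_pos b]
      · have h3am : (3:ℝ) ^ a = 3 ^ m := by rw [ham]
        rcases he with h1 | h1
        · rcases hd with h2 | h2
          · have hεε : ε' = ε := by
              rcases hε with rfl | rfl <;> rcases hε' with rfl | rfl <;> linarith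
            have hδδ : δ' = δ := by
              rcases hδ with rfl | rfl <;> rcases hδ' with rfl | rfl <;> linarith
            have hbne : b ≠ r := by
              rintro rfl
              exact hne (pair_eq (by rw [hεε, ham]) (by rw [hδδ]))
            have h3b : (3:ℝ) ^ b < 3 ^ r := pow3_lt (by omega)
            have hL : 3 * (ε * ε') * 3 ^ a = 3 * 3 ^ m := by rw [h1, h3am]; ring
            have hL2 : (δ * δ') * 3 ^ b = 3 ^ b := by rw [h2]; ring
            nlinarith [pow3_pos m]
          · have hL : (δ * δ') * 3 ^ b = -(3 ^ b) := by rw [h2]; ring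
            have h3b : (3:ℝ) ^ b ≤ 3 ^ r := pow3_le hbr
            nlinarith [pow3_pos b, pow3_pos r, pow3_pos m]
        · have hL : 3 * (ε * ε') * 3 ^ a = -3 * 3 ^ m := by rw [h1, h3am]; ring
          have h3b : (3:ℝ) ^ b ≤ 3 ^ r := pow3_le hbr
          nlinarith [pow3_pos m, pow3_pos r, pow3_pos b]
      · have h3bm : (3:ℝ) ^ b = 3 ^ m := by rw [hbm]
        have hdd' : (δ * δ') * 3 ^ b ≤ 3 ^ m := by rw [← h3bm]; exact hdd
        rcases Nat.lt_or_ge a m with halt | hage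
        · have h3a : (3:ℝ) ^ a ≤ 3 ^ (m-1) := pow3_le (by omega)
          nlinarith [pow3_pos r, pow3_pos (m-1), pow3_pos a, pow3_pos m]
        · have ha : a = m := by omega
          have hrm' : r = m := by omega
          have h3am : (3:ℝ) ^ a = 3 ^ m := by rw [ha]
          have h3rm : (3:ℝ) ^ r = 3 ^ m := by rw [hrm']
          rcases he with h1 | h1
          · rcases hd with h2 | h2
            · have hεε : ε' = ε := by
                rcases hε with rfl | rfl <;> rcases hε' with rfl | rfl <;> linarith
              have hδδ : δ' = δ := by
                rcases hδ with rfl | rfl <;> rcases hδ' with rfl | rfl <;> linarith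
              exact absurd (pair_eq (by rw [hεε, ha]) (by rw [hδδ, hbm, hrm'])) hne
            · have hL : 3 * (ε * ε') * 3 ^ a = 3 * 3 ^ m := by rw [h1, h3am]; ring
              have hL2 : (δ * δ') * 3 ^ b = -(3 ^ m) := by rw [h2, h3bm]; ring
              nlinarith [pow3_pos m]
          · have hL : 3 * (ε * ε') * 3 ^ a = -3 * 3 ^ m := by rw [h1, h3am]; ring
            nlinarith [pow3_pos m]
    · -- p = (ε 3^r/2, δ 3^m/2) ; functional (x,y) ↦ ε x + 3δ y
      have hpQ : (ε * 3 ^ r / 2, δ * 3 ^ m / 2) ∈ QQ m r :=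
        ⟨ε, δ, r, m, hε, hδ, hr, hm1, rfl, Or.inr (Or.inr ⟨rfl, le_refl r⟩)⟩
      apply extreme_of_unique_max (lf ε (3 * δ)) hpQ
      rintro q ⟨ε', δ', a, b, hε', hδ', ha1, hb1, rfl, hreg⟩ hne
      have hfq : lf ε (3 * δ) (ε' * 3 ^ a / 2, δ' * 3 ^ b / 2)
          = ((ε * ε') * 3 ^ a + 3 * (δ * δ') * 3 ^ b) / 2 := by
        rw [lf_apply]; ring
      have hfp : lf ε (3 * δ) (ε * 3 ^ r / 2, δ * 3 ^ m / 2)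
          = (3 ^ r + 3 * 3 ^ m) / 2 := by
        rw [lf_apply]; rcases hε with rfl | rfl <;> rcases hδ with rfl | rfl <;> ring
      rw [hfq, hfp]
      have he : ε * ε' = 1 ∨ ε * ε' = -1 := by
        rcases hε with rfl | rfl <;> rcases hε' with rfl | rfl <;> norm_num
      have hd : δ * δ' = 1 ∨ δ * δ' = -1 := by
        rcases hδ with rfl | rfl <;> rcases hδ' with rfl | rfl <;> norm_num
      have hee : (ε * ε') * 3 ^ a ≤ 3 ^ a := by
        rcases he with h | h <;> rw [h] <;> nlinarith [pow3_pos a]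
      have hdd : (δ * δ') * 3 ^ b ≤ 3 ^ b := by
        rcases hd with h | h <;> rw [h] <;> nlinarith [pow3_pos b]
      rcases hreg with ⟨haM, hbM⟩ | ⟨ham, hbr⟩ | ⟨hbm, har⟩
      · have h3a : (3:ℝ) ^ a ≤ 3 ^ (m-1) := pow3_le haM
        have h3b : (3:ℝ) ^ b ≤ 3 ^ (m-1) := pow3_le hbM
        nlinarith [pow3_pos r, pow3_pos (m-1), pow3_pos a, pow3_pos b]
      · have h3am : (3:ℝ) ^ a = 3 ^ m := by rw [ham]
        have hee' : (ε * ε') * 3 ^ a ≤ 3 ^ m := by rw [← h3am]; exact hee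
        rcases Nat.lt_or_ge b m with hblt | hbge
        · have h3b : (3:ℝ) ^ b ≤ 3 ^ (m-1) := pow3_le (by omega)
          nlinarith [pow3_pos r, pow3_pos (m-1), pow3_pos b, pow3_pos m]
        · have hb : b = m := by omega
          have hrm' : r = m := by omega
          have h3bm : (3:ℝ) ^ b = 3 ^ m := by rw [hb]
          have h3rm : (3:ℝ) ^ r = 3 ^ m := by rw [hrm']
          rcases hd with h2 | h2
          · rcases he with h1 | h1
            · have hεε : ε' = ε := by
                rcases hε with rfl | rfl <;> rcases hε' with rfl | rfl <;> linarith
              have hδδ : δ' = δ := by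
                rcases hδ with rfl | rfl <;> rcases hδ' with rfl | rfl <;> linarith
              exact absurd (pair_eq (by rw [hεε, ham, hrm']) (by rw [hδδ, hb])) hne
            · have hL : (ε * ε') * 3 ^ a = -(3 ^ m) := by rw [h1, h3am]; ring
              have hL2 : 3 * (δ * δ') * 3 ^ b = 3 * 3 ^ m := by rw [h2, h3bm]; ring
              nlinarith [pow3_pos m]
          · have hL : 3 * (δ * δ') * 3 ^ b = -3 * 3 ^ m := by rw [h2, h3bm]; ring
            nlinarith [pow3_pos m]
      · have h3bm : (3:ℝ) ^ b = 3 ^ m := by rw [hbm]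
        rcases hd with h2 | h2
        · have hL2 : 3 * (δ * δ') * 3 ^ b = 3 * 3 ^ m := by rw [h2, h3bm]; ring
          rcases he with h1 | h1
          · have hεε : ε' = ε := by
              rcases hε with rfl | rfl <;> rcases hε' with rfl | rfl <;> linarith
            have hδδ : δ' = δ := by
              rcases hδ with rfl | rfl <;> rcases hδ' with rfl | rfl <;> linarith
            have hane : a ≠ r := by
              rintro rfl
              exact hne (pair_eq (by rw [hεε]) (by rw [hδδ, hbm]))
            have h3a : (3:ℝ) ^ a < 3 ^ r := pow3_lt (by omega)
            have hL : (ε * ε') * 3 ^ a = 3 ^ a := by rw [h1]; ring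
            nlinarith [pow3_pos m]
          · have hL : (ε * ε') * 3 ^ a = -(3 ^ a) := by rw [h1]; ring
            nlinarith [pow3_pos a, pow3_pos r, pow3_pos m]
        · have hL : 3 * (δ * δ') * 3 ^ b = -3 * 3 ^ m := by rw [h2, h3bm]; ring
          have h3a : (3:ℝ) ^ a ≤ 3 ^ r := pow3_le har
          nlinarith [pow3_pos m, pow3_pos r, pow3_pos a]

lemma Mset_eq_QQ (k : ℕ) (hk : 0 < k) : Mset k = QQ k k := by
  ext p
  constructor
  · rintro ⟨ε, δ, a, b, hε, hδ, ha1, hak, hb1, hbk, rfl⟩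
    exact ⟨ε, δ, a, b, hε, hδ, ha1, hb1, rfl, by omega⟩
  · rintro ⟨ε, δ, a, b, hε, hδ, ha1, hb1, rfl, hreg⟩
    exact ⟨ε, δ, a, b, hε, hδ, ha1, by omega, hb1, by omega, rfl⟩

lemma QQ_zero (m : ℕ) (hm : 2 ≤ m) : QQ m 0 = QQ (m-1) (m-1) := by
  ext p
  constructor <;> rintro ⟨ε, δ, a, b, hε, hδ, ha1, hb1, rfl, hreg⟩ <;>
    exact ⟨ε, δ, a, b, hε, hδ, ha1, hb1, rfl, by omega⟩

lemma QQ_one_zero : QQ 1 0 = ∅ := by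
  ext p
  simp only [Set.mem_empty_iff_false, iff_false]
  rintro ⟨ε, δ, a, b, hε, hδ, ha1, hb1, rfl, hreg⟩
  omega

lemma QQ_sdiff (m r : ℕ) (hr : 1 ≤ r) (hrm : r ≤ m) :
    QQ m r \ BB m r = QQ m (r-1) := by
  ext p
  simp only [Set.mem_diff]
  constructor
  · rintro ⟨⟨ε, δ, a, b, hε, hδ, ha1, hb1, rfl, hreg⟩, hnB⟩
    refine ⟨ε, δ, a, b, hε, hδ, ha1, hb1, rfl, ?_⟩
    rcases hreg with h | ⟨rfl, hbr⟩ | ⟨rfl, har⟩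
    · exact Or.inl h
    · rcases Nat.lt_or_ge b r with h | h
      · exact Or.inr (Or.inl ⟨rfl, by omega⟩)
      · have hb : b = r := by omega
        subst hb
        exact absurd ⟨ε, δ, hε, hδ, Or.inl rfl⟩ hnB
    · rcases Nat.lt_or_ge a r with h | h
      · exact Or.inr (Or.inr ⟨rfl, by omega⟩)
      · have ha : a = r := by omega
        subst ha
        exact absurd ⟨ε, δ, hε, hδ, Or.inr rfl⟩ hnB
  · rintro ⟨ε, δ, a, b, hε, hδ, ha1, hb1, rfl, hreg⟩
    constructor
    · exact ⟨ε, δ, a, b, hε, hδ, ha1, hb1, rfl, by omega⟩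
    · rintro ⟨ε', δ', hε', hδ', hBp | hBp⟩ <;> rw [Prod.mk.injEq] at hBp
      · obtain ⟨h1, h2⟩ := hBp
        obtain ⟨ham, -⟩ := sign_pow_inj hε hε' h1
        obtain ⟨hbr, -⟩ := sign_pow_inj hδ hδ' h2
        omega
      · obtain ⟨h1, h2⟩ := hBp
        obtain ⟨har, -⟩ := sign_pow_inj hε hε' h1
        obtain ⟨hbm, -⟩ := sign_pow_inj hδ hδ' h2
        omega

lemma invariant (k : ℕ) (hk : 0 < k) (i : ℕ) :
    peel^[i] (Mset k) = ∅ ∨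
      ∃ m r, 1 ≤ r ∧ r ≤ m ∧ m ≤ k ∧ peel^[i] (Mset k) = QQ m r := by
  induction i with
  | zero =>
    right
    exact ⟨k, k, hk, le_refl k, le_refl k, Mset_eq_QQ k hk⟩
  | succ n ih =>
    rw [Function.iterate_succ_apply']
    rcases ih with h | ⟨m, r, hr, hrm, hmk, h⟩
    · left; rw [h]; simp [peel]
    · rw [h, peel, extremePoints_QQ m r hr hrm, QQ_sdiff m r hr hrm]
      rcases Nat.lt_or_ge 1 r with h1 | h1
      · right; exact ⟨m, r-1, by omega, by omega, hmk, rfl⟩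
      · have hr1 : r = 1 := by omega
        subst hr1
        rcases Nat.lt_or_ge 1 m with h2 | h2
        · right
          exact ⟨m-1, m-1, by omega, le_refl _, by omega, by rw [show (1:ℕ)-1 = 0 from rfl, QQ_zero m h2]⟩
        · left
          have hm : m = 1 := by omega
          subst hm
          rw [show (1:ℕ)-1 = 0 from rfl]
          exact QQ_one_zero

/-- Each convex layer of the peeling process on `M_k` is contained in the
boundary of one of the squares `S_j`, i.e., all its points `p` satisfy
`max (|p₁|, |p₂|) = 3^j / 2`. -/
theorem layer_in_square_boundary (k : ℕ) (hk : 0 < k) (i : ℕ)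
    (hne : peel^[i] (Mset k) ≠ ∅) :
    ∃ j : ℕ, 1 ≤ j ∧ j ≤ k ∧
      ∀ p ∈ (convexHull ℝ (peel^[i] (Mset k))).extremePoints ℝ,
        max |p.1| |p.2| = 3 ^ j / 2 := by
  rcases invariant k hk i with h | ⟨m, r, hr, hrm, hmk, h⟩
  · exact absurd h hne
  · refine ⟨m, le_trans hr hrm, hmk, ?_⟩
    rw [h, extremePoints_QQ m r hr hrm]
    rintro p ⟨ε, δ, hε, hδ, hp | hp⟩ <;> subst hp
    · show max |ε * 3 ^ m / 2| |δ * 3 ^ r / 2| = 3 ^ m / 2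
      rw [abs_sign_div hε (pow3_pos m).le, abs_sign_div hδ (pow3_pos r).le]
      exact max_eq_left (by linarith [pow3_le hrm])
    · show max |ε * 3 ^ r / 2| |δ * 3 ^ m / 2| = 3 ^ m / 2
      rw [abs_sign_div hε (pow3_pos r).le, abs_sign_div hδ (pow3_pos m).le]
      exact max_eq_right (by linarith [pow3_le hrm])
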